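/- There exist a constant C > 0 and x₀ such that for all real x ≥ x₀ and all real c with 0 < c ≤ 1, one has #{n ≤ x : P⁺(n) ≤ x^c} ≤ #{n ≤ x : t_n ≤ x^c} + C·x/(c·log x), uniformly in c. -/

import Mathlib

/-- `tn n` is the least nonnegative integer `t` such that there is a (possibly empty)
subset `S` of `{n+1, ..., n+t}` with `n * ∏_{m ∈ S} m` a perfect square. -/
noncomputable def tn (n : ℕ) : ℕ :=
  sInf {t : ℕ | ∃ S ⊆ Finset.Icc (n + 1) (n + t), IsSquare (n * ∏ m ∈ S, m)}

/-- `Pplus n` is the largest prime factor of `n`, with `Pplus 1 = 1`. -/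
def Pplus (n : ℕ) : ℕ := n.primeFactors.max.unbotD 1



open Finset

noncomputable def vv (n : ℕ) : ℕ →₀ ZMod 2 :=
  (Nat.factorization n).mapRange (Nat.cast) (by simp)

lemma vv_apply (n p : ℕ) : vv n p = ((Nat.factorization n p : ℕ) : ZMod 2) := rfl

lemma vv_mul {a b : ℕ} (ha : a ≠ 0) (hb : b ≠ 0) : vv (a * b) = vv a + vv b := by
  ext p
  simp [vv_apply, Nat.factorization_mul ha hb]

lemma vv_support (n : ℕ) : (vv n).support ⊆ n.primeFactors := by
  classical
  intro p hp
  have := Finsupp.support_mapRange (f := (Nat.cast : ℕ → ZMod 2)) (hf := by simp)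
    (g := Nat.factorization n) hp
  simpa using this

lemma vv_prod {S : Finset ℕ} (hS : ∀ m ∈ S, m ≠ 0) : vv (∏ m ∈ S, m) = ∑ m ∈ S, vv m := by
  classical
  induction S using Finset.cons_induction with
  | empty => ext p; simp [vv_apply]
  | cons a S ha ih =>
    rw [Finset.prod_cons, Finset.sum_cons, vv_mul (hS a (Finset.mem_cons_self a S))
      (Finset.prod_ne_zero_iff.2 fun m hm => hS m (Finset.mem_cons_of_mem hm)),
      ih (fun m hm => hS m (Finset.mem_cons_of_mem hm))]

lemma isSquare_of_vv_eq_zero {k : ℕ} (hk : k ≠ 0) (h : vv k = 0) : IsSquare k := by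
  classical
  have heven : ∀ p, Even (k.factorization p) := by
    intro p
    have : ((k.factorization p : ℕ) : ZMod 2) = 0 := by
      have := DFunLike.congr_fun h p
      simpa [vv_apply] using this
    rw [ZMod.natCast_eq_zero_iff] at this
    exact even_iff_two_dvd.2 this
  refine ⟨∏ p ∈ k.primeFactors, p ^ (k.factorization p / 2), ?_⟩
  conv_lhs => rw [← Nat.factorization_prod_pow_eq_self hk]
  rw [Finsupp.prod, Nat.support_factorization, ← Finset.prod_mul_distrib]
  refine Finset.prod_congr rfl fun p _ => ?_
  obtain ⟨c, hc⟩ := heven p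
  rw [hc, ← pow_add]
  congr 1
  omega

noncomputable def piF (Y : ℕ) : ℕ := #((Finset.Icc 1 Y).filter Nat.Prime)

lemma block_bound {Y : ℕ} (T : Finset ℕ) (a : ℕ)
    (hTsm : ∀ n ∈ T, ∀ p ∈ n.primeFactors, p ≤ Y)
    (hTblock : T ⊆ Finset.Ioc a (a + Y))
    (hTbad : ∀ n ∈ T, ¬ ∃ S ⊆ Finset.Icc (n+1) (n+Y), IsSquare (n * ∏ m ∈ S, m)) :
    T.card ≤ piF Y := by
  classical
  set PY : Finset ℕ := (Finset.Icc 1 Y).filter Nat.Prime with hPY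
  -- elements of T are positive
  have hT0 : ∀ n ∈ T, 0 < n := fun n hn => lt_of_le_of_lt (Nat.zero_le a) (Finset.mem_Ioc.1 (hTblock hn)).1
  -- support of vv n is inside PY for n ∈ T
  have hsupp : ∀ n ∈ T, ∀ p, p ∉ PY → vv n p = 0 := by
    intro n hn p hp
    by_contra h
    have hps : p ∈ (vv n).support := Finsupp.mem_support_iff.2 h
    have hpf := vv_support n hps
    have hprime : p.Prime := Nat.prime_of_mem_primeFactors hpf
    exact hp (Finset.mem_filter.2 ⟨Finset.mem_Icc.2 ⟨hprime.one_lt.le, hTsm n hn p hpf⟩, hprime⟩)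
  -- no nonempty zero-sum subset
  have hzero : ∀ D : Finset ℕ, D ⊆ T → D.Nonempty → ∑ m ∈ D, vv m ≠ 0 := by
    intro D hDT hne hsum
    set n := D.min' hne with hn
    have hnD : n ∈ D := D.min'_mem hne
    have hnT : n ∈ T := hDT hnD
    set S := D.erase n with hS
    have hSsub : S ⊆ Finset.Icc (n+1) (n+Y) := by
      intro m hm
      have hmD : m ∈ D := Finset.mem_of_mem_erase hm
      have hmn : m ≠ n := Finset.ne_of_mem_erase hm
      have h1 : n ≤ m := D.min'_le m hmD
      have h2 := Finset.mem_Ioc.1 (hTblock (hDT hmD))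
      have h3 := Finset.mem_Ioc.1 (hTblock hnT)
      exact Finset.mem_Icc.2 ⟨by omega, by omega⟩
    have hSpos : ∀ m ∈ S, m ≠ 0 := by
      intro m hm
      exact (hT0 m (hDT (Finset.mem_of_mem_erase hm))).ne'
    have hsplit : vv n + ∑ m ∈ S, vv m = 0 := by
      rw [hS, Finset.add_sum_erase _ _ hnD]
      exact hsum
    have hsq : IsSquare (n * ∏ m ∈ S, m) := by
      apply isSquare_of_vv_eq_zero
      · exact Nat.mul_ne_zero (hT0 n hnT).ne' (Finset.prod_ne_zero_iff.2 hSpos)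
      · rw [vv_mul (hT0 n hnT).ne' (Finset.prod_ne_zero_iff.2 hSpos), vv_prod hSpos]
        exact hsplit
    exact hTbad n hnT ⟨S, hSsub, hsq⟩
  -- injection from powerset of T
  set F : Finset ℕ → ({p // p ∈ PY} → ZMod 2) :=
    fun S => fun p => ∑ m ∈ S, vv m p.val with hF
  have hinj : Set.InjOn F (T.powerset : Set (Finset ℕ)) := by
    intro S1 hS1 S2 hS2 hFeq
    simp only [Finset.coe_powerset, Set.mem_preimage, Set.mem_powerset_iff,
      Finset.coe_subset] at hS1 hS2
    have hS1T : S1 ⊆ T := by simpa using hS1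
    have hS2T : S2 ⊆ T := by simpa using hS2
    -- upgrade to Finsupp equality
    have hE : ∑ m ∈ S1, vv m = ∑ m ∈ S2, vv m := by
      ext p
      have e1 : (∑ m ∈ S1, vv m) p = ∑ m ∈ S1, vv m p :=
        map_sum (Finsupp.applyAddHom p) vv S1
      have e2 : (∑ m ∈ S2, vv m) p = ∑ m ∈ S2, vv m p :=
        map_sum (Finsupp.applyAddHom p) vv S2
      rw [e1, e2]
      by_cases hp : p ∈ PY
      · have := congrFun hFeq ⟨p, hp⟩
        simpa only [hF] using this
      · rw [Finset.sum_congr rfl (fun m hm => hsupp m (hS1T hm) p hp),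
          Finset.sum_congr rfl (fun m hm => hsupp m (hS2T hm) p hp)]
        simp
    by_contra hne
    set D := (S1 \ S2) ∪ (S2 \ S1) with hD
    have hDsub : D ⊆ T := by
      intro m hm
      rcases Finset.mem_union.1 hm with h | h
      · exact hS1T (Finset.mem_sdiff.1 h).1
      · exact hS2T (Finset.mem_sdiff.1 h).1
    have hDne : D.Nonempty := by
      rw [Finset.nonempty_iff_ne_empty]
      intro h0
      rw [hD, Finset.union_eq_empty] at h0
      exact hne (Finset.Subset.antisymm (Finset.sdiff_eq_empty_iff_subset.1 h0.1)
        (Finset.sdiff_eq_empty_iff_subset.1 h0.2))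
    have hDzero : ∑ m ∈ D, vv m = 0 := by
      have h1 := Finset.sum_inter_add_sum_sdiff S1 S2 vv
      have h2 := Finset.sum_inter_add_sum_sdiff S2 S1 vv
      have hint : ∑ m ∈ S1 ∩ S2, vv m = ∑ m ∈ S2 ∩ S1, vv m := by
        rw [Finset.inter_comm]
      have hww : ∑ m ∈ S1 \ S2, vv m = ∑ m ∈ S2 \ S1, vv m := by
        have := hE
        rw [← h1, ← h2] at this
        rw [hint] at this
        exact add_left_cancel this
      rw [hD, Finset.sum_union (disjoint_sdiff_sdiff), hww]
      ext p
      simp only [Finsupp.add_apply, Finsupp.coe_zero, Pi.zero_apply]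
      exact CharTwo.add_self_eq_zero _
    exact hzero D hDsub hDne hDzero
  have hcard := Finset.card_le_card_of_injOn F
    (fun S _ => Finset.mem_univ (F S)) hinj
  rw [Finset.card_powerset, Finset.card_univ, Fintype.card_fun, Fintype.card_coe] at hcard
  have : Fintype.card (ZMod 2) = 2 := by simp
  rw [this] at hcard
  exact (Nat.pow_le_pow_iff_right (by norm_num)).1 hcard

lemma chebyshev {Y : ℕ} (hY : 16 ≤ Y) : (piF Y : ℝ) * Real.log Y ≤ 10 * Y := by
  classical
  set m := Nat.sqrt Y with hm
  have hm4 : 4 ≤ m := by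
    have h := Nat.sqrt_le_sqrt hY
    rwa [show (16:ℕ) = 4*4 by norm_num, Nat.sqrt_eq] at h
  have hmY : m ≤ Y := Nat.sqrt_le_self Y
  set k := #((Finset.Ioc m Y).filter Nat.Prime) with hk
  -- m ^ k ≤ 4 ^ Y
  have h1 : m ^ k ≤ ∏ p ∈ (Finset.Ioc m Y).filter Nat.Prime, p :=
    Finset.pow_card_le_prod _ _ _ (fun p hp => (Finset.mem_Ioc.1 (Finset.mem_filter.1 hp).1).1.le)
  have h2 : ∏ p ∈ (Finset.Ioc m Y).filter Nat.Prime, p ≤ primorial Y := by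
    refine Finset.prod_le_prod_of_subset_of_one_le' ?_ ?_
    · intro p hp
      rcases Finset.mem_filter.1 hp with ⟨hp1, hp2⟩
      exact Finset.mem_filter.2 ⟨Finset.mem_range.2 (Nat.lt_succ_of_le (Finset.mem_Ioc.1 hp1).2), hp2⟩
    · intro p hp _
      exact (Finset.mem_filter.1 hp).2.one_lt.le
  have h3 : m ^ k ≤ 4 ^ Y := (h1.trans h2).trans (primorial_le_4_pow Y)
  have hmpos : (0:ℝ) < (m:ℝ) := by positivity
  have hYpos : (0:ℝ) < (Y:ℝ) := by positivity
  have hlog1 : (k:ℝ) * Real.log m ≤ (Y:ℝ) * Real.log 4 := by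
    have := Real.log_le_log (by positivity) (show ((m:ℝ))^k ≤ ((4:ℝ))^Y by
      exact_mod_cast h3)
    simpa [Real.log_pow] using this
  -- log Y ≤ 4 log m
  have hY4m : (Y:ℝ) < 4 * ((m:ℝ) * m) := by
    have h := Nat.lt_succ_sqrt' Y
    have h2 : Y < 4 * (m * m) := by nlinarith [h, hm4]
    exact_mod_cast h2
  have hlogm_pos : (0:ℝ) < Real.log m := Real.log_pos (by exact_mod_cast hm4.trans_lt' (by norm_num))
  have hlog4 : Real.log 4 ≤ Real.log Y / 2 := by
    have : ((16:ℝ)) ≤ (Y:ℝ) := by exact_mod_cast hY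
    have h16 : Real.log 16 ≤ Real.log Y := Real.log_le_log (by norm_num) this
    have : Real.log 16 = 2 * Real.log 4 := by
      rw [show (16:ℝ) = 4^2 by norm_num, Real.log_pow]; push_cast; ring
    linarith
  have hlogY_le : Real.log Y ≤ 4 * Real.log m := by
    have := Real.log_le_log (by positivity) hY4m.le
    rw [Real.log_mul (by norm_num) (by positivity),
      Real.log_mul (ne_of_gt hmpos) (ne_of_gt hmpos)] at this
    linarith
  -- k * log Y ≤ 6 Y
  have hklogY : (k:ℝ) * Real.log Y ≤ 6 * Y := by
    have h4 : (k:ℝ) * Real.log Y ≤ 4 * ((k:ℝ) * Real.log m) := by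
      have : (0:ℝ) ≤ (k:ℝ) := by positivity
      nlinarith
    have hl4 : Real.log 4 ≤ 1.4 := by
      have : Real.log 4 = 2 * Real.log 2 := by
        rw [show (4:ℝ) = 2^2 by norm_num, Real.log_pow]; push_cast; ring
      nlinarith [Real.log_two_lt_d9]
    nlinarith
  -- m * log Y ≤ 4 Y
  have hmlogY : (m:ℝ) * Real.log Y ≤ 4 * Y := by
    have hlm : Real.log m ≤ (m:ℝ) - 1 := Real.log_le_sub_one_of_pos hmpos
    have hmsq : (m:ℝ) * m ≤ Y := by
      have := Nat.sqrt_le' Y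
      have h2 : m * m ≤ Y := by nlinarith [this]
      exact_mod_cast h2
    nlinarith
  -- piF ≤ m + k
  have hpi : piF Y ≤ m + k := by
    have hsub : (Finset.Icc 1 Y).filter Nat.Prime ⊆
        ((Finset.Icc 1 m).filter Nat.Prime) ∪ ((Finset.Ioc m Y).filter Nat.Prime) := by
      intro p hp
      rcases Finset.mem_filter.1 hp with ⟨hp1, hp2⟩
      rcases Finset.mem_Icc.1 hp1 with ⟨hp3, hp4⟩
      by_cases h : p ≤ m
      · exact Finset.mem_union_left _ (Finset.mem_filter.2 ⟨Finset.mem_Icc.2 ⟨hp3, h⟩, hp2⟩)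
      · exact Finset.mem_union_right _
          (Finset.mem_filter.2 ⟨Finset.mem_Ioc.2 ⟨Nat.lt_of_not_le h, hp4⟩, hp2⟩)
    calc piF Y ≤ #(((Finset.Icc 1 m).filter Nat.Prime) ∪ ((Finset.Ioc m Y).filter Nat.Prime)) :=
          Finset.card_le_card hsub
      _ ≤ #((Finset.Icc 1 m).filter Nat.Prime) + k := Finset.card_union_le _ _
      _ ≤ m + k := by
          have : #((Finset.Icc 1 m).filter Nat.Prime) ≤ #(Finset.Icc 1 m) :=
            Finset.card_le_card (Finset.filter_subset _ _)
          simpa [Nat.card_Icc] using Nat.add_le_add_right (this.trans (by simp [Nat.card_Icc])) k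
  have hlogY_pos : (0:ℝ) < Real.log Y := Real.log_pos (by exact_mod_cast lt_of_lt_of_le (by norm_num) hY)
  have : (piF Y : ℝ) ≤ (m:ℝ) + k := by exact_mod_cast hpi
  nlinarith


lemma le_Pplus {n p : ℕ} (hp : p ∈ n.primeFactors) : p ≤ Pplus n := by
  have h := Finset.le_max hp
  unfold Pplus
  cases hmax : n.primeFactors.max with
  | bot => rw [hmax] at h; exact absurd h (by simp)
  | coe m => rw [hmax] at h; simpa [WithBot.unbotD] using h


theorem stmt_3 :
    ∃ C > (0 : ℝ), ∃ x₀ : ℝ, ∀ x : ℝ, x₀ ≤ x → ∀ c : ℝ, 0 < c → c ≤ 1 →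
      (({n : ℕ | 0 < n ∧ (n : ℝ) ≤ x ∧ (Pplus n : ℝ) ≤ x ^ c}.ncard : ℝ))
        ≤ ({n : ℕ | 0 < n ∧ (n : ℝ) ≤ x ∧ (tn n : ℝ) ≤ x ^ c}.ncard : ℝ)
          + C * x / (c * Real.log x) := by
  classical
  refine ⟨100, by norm_num, 16, ?_⟩
  intro x hx c hc hc1
  have hx1 : (1:ℝ) < x := lt_of_lt_of_le (by norm_num) hx
  have hx0 : (0:ℝ) ≤ x := by linarith
  have hlogx : 0 < Real.log x := Real.log_pos hx1
  have hL : 0 < c * Real.log x := mul_pos hc hlogx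
  have hxc0 : (0:ℝ) < x ^ c := Real.rpow_pos_of_pos (by linarith) c
  have hlog_rpow : Real.log (x ^ c) = c * Real.log x := Real.log_rpow (by linarith) c
  set N := ⌊x⌋₊ with hN
  set Y := ⌊x ^ c⌋₊ with hY
  letI : DecidablePred (fun n : ℕ => (Pplus n : ℝ) ≤ x ^ c) := Classical.decPred _
  letI : DecidablePred (fun n : ℕ => (tn n : ℝ) ≤ x ^ c) := Classical.decPred _
  set AF : Finset ℕ := (Finset.Icc 1 N).filter (fun n => (Pplus n : ℝ) ≤ x ^ c) with hAF
  set BF : Finset ℕ := (Finset.Icc 1 N).filter (fun n => (tn n : ℝ) ≤ x ^ c) with hBF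
  have hmemIcc : ∀ n : ℕ, n ∈ Finset.Icc 1 N ↔ 0 < n ∧ (n:ℝ) ≤ x := by
    intro n
    rw [Finset.mem_Icc]
    constructor
    · rintro ⟨h1, h2⟩
      exact ⟨h1, le_trans (Nat.cast_le.2 h2) (Nat.floor_le hx0)⟩
    · rintro ⟨h1, h2⟩
      exact ⟨h1, Nat.le_floor h2⟩
  have hA : {n : ℕ | 0 < n ∧ (n : ℝ) ≤ x ∧ (Pplus n : ℝ) ≤ x ^ c} = ↑AF := by
    ext n
    simp only [Set.mem_setOf_eq, hAF, Finset.coe_filter, Finset.mem_coe, Finset.mem_filter,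
      hmemIcc n]
    tauto
  have hB : {n : ℕ | 0 < n ∧ (n : ℝ) ≤ x ∧ (tn n : ℝ) ≤ x ^ c} = ↑BF := by
    ext n
    simp only [Set.mem_setOf_eq, hBF, Finset.coe_filter, Finset.mem_coe, Finset.mem_filter,
      hmemIcc n]
    tauto
  rw [hA, hB, Set.ncard_coe_finset, Set.ncard_coe_finset]
  by_cases hsmall : x ^ c < 16
  · -- trivial regime
    have h1 : AF.card ≤ N := by
      have := Finset.card_le_card (Finset.filter_subset (fun n => (Pplus n : ℝ) ≤ x ^ c) (Finset.Icc 1 N))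
      simpa [Nat.card_Icc] using this
    have h2 : (N:ℝ) ≤ x := Nat.floor_le hx0
    have h3 : c * Real.log x ≤ 15 := by
      rw [← hlog_rpow]
      calc Real.log (x ^ c) ≤ Real.log 16 := Real.log_le_log hxc0 (le_of_lt hsmall)
        _ ≤ 15 := by linarith [Real.log_le_sub_one_of_pos (show (0:ℝ) < 16 by norm_num)]
    have h4 : x ≤ 100 * x / (c * Real.log x) := by
      rw [le_div_iff₀ hL]
      nlinarith
    have h5 : (0:ℝ) ≤ (BF.card : ℝ) := by positivity
    calc (AF.card : ℝ) ≤ (N:ℝ) := Nat.cast_le.2 h1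
      _ ≤ 100 * x / (c * Real.log x) := le_trans h2 h4
      _ ≤ (BF.card : ℝ) + 100 * x / (c * Real.log x) := by linarith
  · -- main regime
    push_neg at hsmall
    have hY16 : 16 ≤ Y := Nat.le_floor (by exact_mod_cast hsmall)
    have hYpos : 0 < Y := by omega
    have hYr : (Y:ℝ) ≤ x ^ c := Nat.floor_le (le_of_lt hxc0)
    have hYr2 : x ^ c < (Y:ℝ) + 1 := Nat.lt_floor_add_one _
    -- block decomposition
    have hbad : (AF \ BF).card ≤ (N / Y + 1) * piF Y := by
      have hcover : AF \ BF ⊆ (Finset.range (N / Y + 1)).biUnion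
          (fun j => (AF \ BF) ∩ Finset.Ioc (j * Y) (j * Y + Y)) := by
        intro n hn
        have hnA : n ∈ AF := (Finset.mem_sdiff.1 hn).1
        have hnI : n ∈ Finset.Icc 1 N := Finset.mem_of_mem_filter n hnA
        rcases Finset.mem_Icc.1 hnI with ⟨hn1, hn2⟩
        refine Finset.mem_biUnion.2 ⟨(n - 1) / Y, ?_, ?_⟩
        · refine Finset.mem_range.2 ?_
          have : (n - 1) / Y ≤ N / Y := Nat.div_le_div_right (by omega)
          omega
        · refine Finset.mem_inter.2 ⟨hn, ?_⟩
          have hq : (n - 1) / Y * Y ≤ n - 1 := Nat.div_mul_le_self _ _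
          have hq2 : n - 1 < (n - 1) / Y * Y + Y := Nat.lt_div_mul_add hYpos
          refine Finset.mem_Ioc.2 ⟨?_, ?_⟩ <;> omega
      calc (AF \ BF).card ≤ ((Finset.range (N / Y + 1)).biUnion
            (fun j => (AF \ BF) ∩ Finset.Ioc (j * Y) (j * Y + Y))).card :=
            Finset.card_le_card hcover
        _ ≤ ∑ j ∈ Finset.range (N / Y + 1),
              ((AF \ BF) ∩ Finset.Ioc (j * Y) (j * Y + Y)).card := Finset.card_biUnion_le
        _ ≤ ∑ _j ∈ Finset.range (N / Y + 1), piF Y := by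
            refine Finset.sum_le_sum fun j _ => ?_
            refine block_bound _ (j * Y) ?_ ?_ ?_
            · intro n hn p hp
              have hnA : n ∈ AF := (Finset.mem_sdiff.1 (Finset.mem_inter.1 hn).1).1
              have hPle : (Pplus n : ℝ) ≤ x ^ c := (Finset.mem_filter.1 hnA).2
              have : (p : ℝ) ≤ x ^ c := le_trans (Nat.cast_le.2 (le_Pplus hp)) hPle
              exact Nat.le_floor this
            · exact Finset.inter_subset_right
            · intro n hn hex
              rcases Finset.mem_inter.1 hn with ⟨hn1, _⟩
              rcases Finset.mem_sdiff.1 hn1 with ⟨hnA, hnB⟩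
              apply hnB
              have htn : tn n ≤ Y := Nat.sInf_le hex
              refine Finset.mem_filter.2 ⟨Finset.mem_of_mem_filter n hnA, ?_⟩
              calc (tn n : ℝ) ≤ (Y : ℝ) := Nat.cast_le.2 htn
                _ ≤ x ^ c := hYr
        _ = (N / Y + 1) * piF Y := by
            rw [Finset.sum_const, Finset.card_range, smul_eq_mul]
    -- real arithmetic
    have hstep : AF.card ≤ BF.card + (N / Y + 1) * piF Y :=
      le_trans (Finset.card_le_card_sdiff_add_card (s := AF) (t := BF)) (by omega)
    have hYx : (Y:ℝ) ≤ x := le_trans hYr (by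
      calc x ^ c ≤ x ^ (1:ℝ) := Real.rpow_le_rpow_of_exponent_le (le_of_lt hx1) hc1
        _ = x := Real.rpow_one x)
    have hYrpos : (0:ℝ) < (Y:ℝ) := by exact_mod_cast hYpos
    have hK : ((N / Y + 1 : ℕ) : ℝ) ≤ 2 * x / Y := by
      push_cast
      have h1 : ((N / Y : ℕ) : ℝ) ≤ (N:ℝ) / (Y:ℝ) := Nat.cast_div_le
      have h2 : (N:ℝ) ≤ x := Nat.floor_le hx0
      have h3 : (1:ℝ) ≤ x / Y := by
        rw [le_div_iff₀ hYrpos]; linarith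
      have h4 : (N:ℝ) / Y ≤ x / Y := by
        gcongr
      rw [show 2 * x / (Y:ℝ) = x / Y + x / Y by ring]
      linarith
    have hlogY : (c * Real.log x) / 2 ≤ Real.log Y := by
      have hY2 : x ^ c / 2 ≤ (Y:ℝ) := by linarith
      have hl : Real.log (x ^ c / 2) ≤ Real.log Y :=
        Real.log_le_log (by positivity) hY2
      rw [Real.log_div (ne_of_gt hxc0) (by norm_num), hlog_rpow] at hl
      have h16 : Real.log 16 ≤ c * Real.log x := by
        rw [← hlog_rpow]; exact Real.log_le_log (by norm_num) hsmall
      have hlog2 : Real.log 2 ≤ (c * Real.log x) / 4 := by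
        have : Real.log 16 = 4 * Real.log 2 := by
          rw [show (16:ℝ) = 2^4 by norm_num, Real.log_pow]; push_cast; ring
        linarith
      linarith
    have hcheb := chebyshev hY16
    have hlogYpos : (0:ℝ) < Real.log Y :=
      Real.log_pos (by exact_mod_cast lt_of_lt_of_le (by norm_num) hY16)
    have hpiY : (piF Y : ℝ) ≤ 20 * Y / (c * Real.log x) := by
      rw [le_div_iff₀ hL]
      have h1 : (piF Y : ℝ) * (c * Real.log x) ≤ (piF Y : ℝ) * (2 * Real.log Y) := by
        apply mul_le_mul_of_nonneg_left (by linarith) (by positivity)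
      nlinarith
    have hfinal : ((N / Y + 1 : ℕ) : ℝ) * (piF Y : ℝ) ≤ 100 * x / (c * Real.log x) := by
      have h1 : ((N / Y + 1 : ℕ) : ℝ) * (piF Y : ℝ) ≤ (2 * x / Y) * (20 * Y / (c * Real.log x)) :=
        mul_le_mul hK hpiY (by positivity) (by positivity)
      have h2 : (2 * x / (Y:ℝ)) * (20 * Y / (c * Real.log x)) = 40 * x / (c * Real.log x) := by
        field_simp
        ring
      rw [h2] at h1
      refine h1.trans ?_
      gcongr <;> linarith
    calc (AF.card : ℝ) ≤ (BF.card : ℝ) + ((N / Y + 1 : ℕ) : ℝ) * (piF Y : ℝ) := by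
          exact_mod_cast hstep
      _ ≤ (BF.card : ℝ) + 100 * x / (c * Real.log x) := by linarith
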